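/- arXiv:2211.12858 — 2 statements merged into one kernel-verified Lean document; each statement's English description precedes it below -/
import Mathlib

section
/- Let G ∈ ℝ^{n×d} with columns g_1,…,g_d, and let i_1,…,i_d be a permutation of {1,…,d} sorting the columns so that ‖g_{i_1}‖ ≥ ‖g_{i_2}‖ ≥ … ≥ ‖g_{i_d}‖. Let G_k consist of the top-k columns g_{i_1},…,g_{i_k}, and define S_G(R) = ‖Gᵀ v_R‖²/(|R|+λ) for λ > 0. Then sup over subsets R of |S_G(R) − S_{G_k}(R)| ≤ Σ_{j=k+1}^d ‖g_{i_j}‖². -/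
open Matrix

/-- Spectral (operator) norm of a real matrix, as a map between Euclidean spaces. -/
noncomputable def opNorm {m n : Type*} [Fintype m] [Fintype n] [DecidableEq n]
    (A : Matrix m n ℝ) : ℝ :=
  ‖LinearMap.toContinuousLinearMap (Matrix.toEuclideanLin A)‖

/-- Indicator vector of a subset `R ⊆ {1,…,n}`. -/
def ind {n : ℕ} (R : Finset (Fin n)) : Fin n → ℝ := fun i => if i ∈ R then 1 else 0

/-- Scoring function `S_G(R) = ‖Gᵀ v_R‖² / (|R| + λ)`. -/
noncomputable def score {n : ℕ} {d : Type*} [Fintype d]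
    (G : Matrix (Fin n) d ℝ) (R : Finset (Fin n)) (lam : ℝ) : ℝ :=
  (∑ j, (Matrix.mulVec Gᵀ (ind R) j) ^ 2) / (R.card + lam)

/-- Top Outputs sketching guarantee: keeping the `k` columns of largest Euclidean
norm changes the scoring function by at most the sum of squared norms of the
discarded columns. Columns are sorted via the permutation `σ` so that
`‖g_{σ 0}‖ ≥ ‖g_{σ 1}‖ ≥ …`. -/
theorem stmt_4 {n d k : ℕ} (hk : k ≤ d) (G : Matrix (Fin n) (Fin d) ℝ)
    (σ : Equiv.Perm (Fin d))
    (hsort : ∀ j j' : Fin d, j ≤ j' →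
      Real.sqrt (∑ r, (G r (σ j')) ^ 2) ≤ Real.sqrt (∑ r, (G r (σ j)) ^ 2))
    (Gk : Matrix (Fin n) (Fin k) ℝ)
    (hGk : Gk = G.submatrix id (fun j => σ (Fin.castLE hk j)))
    (lam : ℝ) (hlam : 0 < lam) (R : Finset (Fin n)) :
    |score G R lam - score Gk R lam| ≤
      ∑ j ∈ Finset.univ.filter (fun j : Fin d => k ≤ (j : ℕ)), ∑ r, (G r (σ j)) ^ 2 := by
  set c : ℝ := (R.card : ℝ) + lam with hc
  have hc0 : 0 < c := by positivity
  set F : Fin d → ℝ := fun j => (∑ r, G r j * ind R r) ^ 2 with hF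
  have hterm : ∀ j, (Matrix.mulVec Gᵀ (ind R) j) ^ 2 = F j := by
    intro j; simp [Matrix.mulVec, dotProduct, F, Matrix.transpose_apply]
  have hSG : score G R lam = (∑ j : Fin d, F (σ j)) / c := by
    simp only [score, hterm, Equiv.sum_comp σ F, hc]
  have hfilt : Finset.univ.filter (fun j : Fin d => (j : ℕ) < k)
      = Finset.univ.map (Fin.castLEEmb hk) := by
    ext j
    simp only [Finset.mem_filter, Finset.mem_univ, true_and, Finset.mem_map,
      Fin.castLEEmb_apply]
    constructor
    · intro h; exact ⟨⟨j, h⟩, by simp [Fin.ext_iff, Fin.castLE]⟩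
    · rintro ⟨a, rfl⟩; simpa [Fin.castLE] using a.isLt
  have hSGk : score Gk R lam = (∑ j ∈ Finset.univ.filter (fun j : Fin d => (j : ℕ) < k),
      F (σ j)) / c := by
    rw [score, hfilt, Finset.sum_map]
    congr 1
    exact Finset.sum_congr rfl fun j _ => by
      simp [hGk, Matrix.mulVec, dotProduct, F, Matrix.transpose_apply, Matrix.submatrix_apply]
  have hsplit : (∑ j : Fin d, F (σ j))
      = (∑ j ∈ Finset.univ.filter (fun j : Fin d => (j : ℕ) < k), F (σ j))
      + ∑ j ∈ Finset.univ.filter (fun j : Fin d => k ≤ (j : ℕ)), F (σ j) := by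
    rw [← Finset.sum_filter_add_sum_filter_not Finset.univ (fun j : Fin d => (j : ℕ) < k)]
    congr 1
    apply Finset.sum_congr _ (fun _ _ => rfl)
    apply Finset.filter_congr
    intro j _
    simp [not_lt]
  have hdiff : score G R lam - score Gk R lam
      = (∑ j ∈ Finset.univ.filter (fun j : Fin d => k ≤ (j : ℕ)), F (σ j)) / c := by
    rw [hSG, hSGk, hsplit, add_div]
    ring
  have hFnonneg : ∀ j, 0 ≤ F j := fun j => sq_nonneg _
  rw [hdiff, abs_of_nonneg (by positivity)]
  rw [div_le_iff₀ hc0]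
  calc (∑ j ∈ Finset.univ.filter (fun j : Fin d => k ≤ (j : ℕ)), F (σ j))
      ≤ ∑ j ∈ Finset.univ.filter (fun j : Fin d => k ≤ (j : ℕ)),
        (∑ r, (G r (σ j)) ^ 2) * c := by
        apply Finset.sum_le_sum
        intro j _
        have hcs := Finset.sum_mul_sq_le_sq_mul_sq (Finset.univ : Finset (Fin n))
          (fun r => G r (σ j)) (ind R)
        have hind : (∑ r, (ind R r) ^ 2) = (R.card : ℝ) := by
          have h1 : ∀ x, (ind R x) ^ 2 = if x ∈ R then (1:ℝ) else 0 := by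
            intro x; simp only [ind]; split <;> norm_num
          rw [Finset.sum_congr rfl fun x _ => h1 x, Finset.sum_ite_mem]
          simp
        calc F (σ j) ≤ (∑ r, (G r (σ j)) ^ 2) * (∑ r, (ind R r) ^ 2) := hcs
          _ = (∑ r, (G r (σ j)) ^ 2) * (R.card : ℝ) := by rw [hind]
          _ ≤ (∑ r, (G r (σ j)) ^ 2) * c := by
              apply mul_le_mul_of_nonneg_left (by simp [hc]; linarith) (by positivity)
    _ = (∑ j ∈ Finset.univ.filter (fun j : Fin d => k ≤ (j : ℕ)),
        ∑ r, (G r (σ j)) ^ 2) * c := by rw [Finset.sum_mul]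
end

section
/- Let G ∈ ℝ^{n×d} and let G_k = U_k Σ_k be the rank-k truncated SVD of G (keeping the k largest singular values and the corresponding left singular vectors). Define S_G(R) = ‖Gᵀ v_R‖²/(|R|+λ) for λ > 0. Then sup over subsets R ⊆ {1,…,n} of |S_G(R) − S_{G_k}(R)| ≤ σ_{k+1}(G)², where σ_{k+1}(G) is the (k+1)-st largest singular value of G. -/
open Matrix

lemma orth_sum_sq {m : Type*} [Fintype m] [DecidableEq m] (A : Matrix m m ℝ)
    (hA : A ∈ Matrix.orthogonalGroup m ℝ) (x : m → ℝ) :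
    ∑ i, (A.mulVec x i)^2 = ∑ i, (x i)^2 := by
  have h1 : Aᵀ * A = 1 := by
    have := Matrix.mem_orthogonalGroup_iff' m ℝ |>.mp hA
    simpa [Matrix.star_eq_conjTranspose] using this
  have : (A.mulVec x) ⬝ᵥ (A.mulVec x) = x ⬝ᵥ x := by
    rw [Matrix.dotProduct_mulVec, ← Matrix.mulVec_transpose, Matrix.mulVec_mulVec, h1,
      Matrix.one_mulVec]
  simpa [dotProduct, sq] using this

/-- Truncated SVD guarantee. `G = U Σ Vᵀ` is a full SVD (`U`, `V` orthogonal,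
`Σ` rectangular diagonal with nonincreasing nonnegative entries `s`), and
`G_k = U_k Σ_k` keeps the `k` largest singular values. Then the scoring
function changes by at most `σ_{k+1}(G)² = (s k)²` (0-indexed). -/
theorem stmt_5 {n d k : ℕ} (hkn : k < n) (hkd : k < d)
    (G : Matrix (Fin n) (Fin d) ℝ)
    (U : Matrix (Fin n) (Fin n) ℝ) (hU : U ∈ Matrix.orthogonalGroup (Fin n) ℝ)
    (V : Matrix (Fin d) (Fin d) ℝ) (hV : V ∈ Matrix.orthogonalGroup (Fin d) ℝ)
    (s : ℕ → ℝ) (hs_nonneg : ∀ j, 0 ≤ s j) (hs_mono : ∀ j j', j ≤ j' → s j' ≤ s j)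
    (Smat : Matrix (Fin n) (Fin d) ℝ)
    (hS : Smat = Matrix.of fun (i : Fin n) (j : Fin d) => if (i : ℕ) = (j : ℕ) then s (i : ℕ) else 0)
    (hG : G = U * Smat * Vᵀ)
    (Gk : Matrix (Fin n) (Fin k) ℝ)
    (hGk : Gk = Matrix.of fun i (j : Fin k) => U i (Fin.castLE hkn.le j) * s (j : ℕ))
    (lam : ℝ) (hlam : 0 < lam) (R : Finset (Fin n)) :
    |score G R lam - score Gk R lam| ≤ (s k) ^ 2 := by
  classical
  simp only [score]
  set v : Fin n → ℝ := ind R with hv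
  set w : Fin n → ℝ := Uᵀ.mulVec v with hw
  set w' : ℕ → ℝ := fun j => if h : j < n then (w ⟨j, h⟩)^2 else 0 with hw'
  set f : ℕ → ℝ := fun j => (s j)^2 * w' j with hf
  have hw'_nonneg : ∀ j, 0 ≤ w' j := by
    intro j; rw [hw']; dsimp only; split <;> positivity
  have hf_nonneg : ∀ j, 0 ≤ f j := by
    intro j; exact mul_nonneg (sq_nonneg _) (hw'_nonneg j)
  -- sum of w² equals card R
  have hsum_w : ∑ i, (w i)^2 = (R.card : ℝ) := by
    rw [hw]
    have := orth_sum_sq Uᵀ (Matrix.mem_orthogonalGroup_iff' (Fin n) ℝ |>.mpr ?_) v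
    · rw [this]
      simp [hv, ind, apply_ite (fun t : ℝ => t ^ 2)]
    · have := Matrix.mem_orthogonalGroup_iff (Fin n) ℝ |>.mp hU
      simpa [Matrix.star_eq_conjTranspose] using this
  have hsum_w' : ∑ j ∈ Finset.range n, w' j = (R.card : ℝ) := by
    rw [← hsum_w, ← Fin.sum_univ_eq_sum_range w']
    apply Finset.sum_congr rfl
    intro i _
    rw [hw']; dsimp only; rw [dif_pos i.isLt]
  -- T = ∑ f over range d
  have hT : ∑ j, (Gᵀ.mulVec v j)^2 = ∑ j ∈ Finset.range d, f j := by
    have hGt : Gᵀ = V * (Smatᵀ * Uᵀ) := by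
      rw [hG]; simp [Matrix.transpose_mul, Matrix.mul_assoc]
    have hstep : ∀ j : Fin d, (Smatᵀ * Uᵀ).mulVec v j
        = if h : (j:ℕ) < n then s j * w ⟨j, h⟩ else 0 := by
      intro j
      rw [← Matrix.mulVec_mulVec, ← hw]
      simp only [Matrix.mulVec, dotProduct, Matrix.transpose_apply, hS,
        Matrix.of_apply, ite_mul, zero_mul]
      split
      · next h =>
        rw [Finset.sum_eq_single (⟨(j:ℕ), h⟩ : Fin n)]
        · simp
        · intro x _ hx
          rw [if_neg]; intro hxy; exact hx (Fin.ext hxy)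
        · simp
      · next h =>
        apply Finset.sum_eq_zero
        intro x _
        rw [if_neg]; intro hxy; exact h (hxy ▸ x.isLt)
    rw [hGt]
    have := orth_sum_sq V hV ((Smatᵀ * Uᵀ).mulVec v)
    rw [show (V * (Smatᵀ * Uᵀ)).mulVec v = V.mulVec ((Smatᵀ * Uᵀ).mulVec v) from
      (Matrix.mulVec_mulVec _ _ _).symm, this]
    have : ∀ j : Fin d, ((Smatᵀ * Uᵀ).mulVec v j)^2
        = (fun m : ℕ => f m) (j : ℕ) := by
      intro j
      rw [hstep j, hf, hw']
      dsimp only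
      split <;> ring
    rw [Finset.sum_congr rfl fun j _ => this j, Fin.sum_univ_eq_sum_range]
  -- Tk = ∑ f over range k
  have hTk : ∑ j, (Gkᵀ.mulVec v j)^2 = ∑ j ∈ Finset.range k, f j := by
    have hstep : ∀ j : Fin k, (Gkᵀ.mulVec v) j = s (j:ℕ) * w (Fin.castLE hkn.le j) := by
      intro j
      rw [hw]
      simp only [hGk, Matrix.mulVec, dotProduct, Matrix.transpose_apply,
        Matrix.of_apply]
      rw [Finset.mul_sum]
      apply Finset.sum_congr rfl
      intro i _
      ring
    have : ∀ j : Fin k, ((Gkᵀ.mulVec v) j)^2 = (fun m : ℕ => f m) (j : ℕ) := by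
      intro j
      rw [hstep j, hf, hw', mul_pow]
      dsimp only
      rw [dif_pos (j.isLt.trans hkn)]
      congr 2
    rw [Finset.sum_congr rfl fun j _ => this j, Fin.sum_univ_eq_sum_range]
  rw [hT, hTk]
  set c : ℝ := (R.card : ℝ) with hc
  have hc0 : 0 ≤ c := Nat.cast_nonneg _
  have hpos : 0 < c + lam := by linarith
  have hsplit : ∑ j ∈ Finset.range d, f j
      = ∑ j ∈ Finset.range k, f j + ∑ j ∈ Finset.Ico k d, f j :=
    (Finset.sum_range_add_sum_Ico f hkd.le).symm
  set D : ℝ := ∑ j ∈ Finset.Ico k d, f j with hD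
  have hD0 : 0 ≤ D := Finset.sum_nonneg fun j _ => hf_nonneg j
  have hDle : D ≤ (s k)^2 * c := by
    have h1 : D ≤ ∑ j ∈ Finset.Ico k d, (s k)^2 * w' j := by
      apply Finset.sum_le_sum
      intro j hj
      rw [hf]
      exact mul_le_mul_of_nonneg_right
        (pow_le_pow_left₀ (hs_nonneg j) (hs_mono k j (Finset.mem_Ico.mp hj).1) 2)
        (hw'_nonneg j)
    have h2 : ∑ j ∈ Finset.Ico k d, (s k)^2 * w' j
        ≤ ∑ j ∈ Finset.range (max d n), (s k)^2 * w' j := by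
      apply Finset.sum_le_sum_of_subset_of_nonneg
      · intro x hx
        rw [Finset.mem_range]
        exact lt_of_lt_of_le (Finset.mem_Ico.mp hx).2 (le_max_left _ _)
      · intro j _ _
        exact mul_nonneg (sq_nonneg _) (hw'_nonneg j)
    have h3 : ∑ j ∈ Finset.range (max d n), (s k)^2 * w' j = (s k)^2 * c := by
      rw [← Finset.mul_sum, ← hsum_w']
      congr 1
      rw [← Finset.sum_range_add_sum_Ico w' (le_max_right d n)]
      have : ∑ j ∈ Finset.Ico n (max d n), w' j = 0 := by
        apply Finset.sum_eq_zero
        intro j hj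
        rw [hw']; dsimp only
        rw [dif_neg (Nat.not_lt.mpr (Finset.mem_Ico.mp hj).1)]
      rw [this, add_zero]
    linarith
  have habs : (∑ j ∈ Finset.range d, f j) / (c + lam)
      - (∑ j ∈ Finset.range k, f j) / (c + lam) = D / (c + lam) := by
    rw [hsplit]; ring
  rw [habs, abs_of_nonneg (div_nonneg hD0 hpos.le), div_le_iff₀ hpos]
  nlinarith [sq_nonneg (s k)]
end
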